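/- For each permutation σ ∈ S_N and each choice of positive masses, the function W = U + I has exactly one critical point in the component Ω_σ, and this critical point is the unique global minimum of W on Ω_σ. -/

import Mathlib

open Finset

noncomputable def Upot {N : ℕ} (m : Fin N → ℝ) (x : Fin N → ℝ) : ℝ :=
  ∑ i, ∑ j ∈ Finset.Ioi i, m i * m j / |x i - x j|

noncomputable def inertia {N : ℕ} (m : Fin N → ℝ) (x : Fin N → ℝ) : ℝ :=
  ∑ i, m i * x i ^ 2

section helpers

variable {N : ℕ} {m : Fin N → ℝ} {σ : Equiv.Perm (Fin N)}

set_option linter.unusedVariables false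

lemma upot_nonneg (hm : ∀ i, 0 < m i) (x : Fin N → ℝ) : 0 ≤ Upot m x := by
  apply Finset.sum_nonneg; intro i _
  apply Finset.sum_nonneg; intro j _
  exact div_nonneg (mul_nonneg (hm i).le (hm j).le) (abs_nonneg _)

lemma inertia_nonneg (hm : ∀ i, 0 < m i) (x : Fin N → ℝ) : 0 ≤ inertia m x :=
  Finset.sum_nonneg fun i _ => mul_nonneg (hm i).le (sq_nonneg _)

lemma term_le_upot (hm : ∀ i, 0 < m i) (x : Fin N → ℝ) {a b : Fin N} (hab : a < b) :
    m a * m b / |x a - x b| ≤ Upot m x := by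
  have h1 : m a * m b / |x a - x b| ≤ ∑ j ∈ Finset.Ioi a, m a * m j / |x a - x j| := by
    apply Finset.single_le_sum (f := fun j => m a * m j / |x a - x j|)
    · intro j _; exact div_nonneg (mul_nonneg (hm a).le (hm j).le) (abs_nonneg _)
    · simpa using hab
  refine h1.trans ?_
  apply Finset.single_le_sum (f := fun i => ∑ j ∈ Finset.Ioi i, m i * m j / |x i - x j|)
  · intro i _
    apply Finset.sum_nonneg; intro j _
    exact div_nonneg (mul_nonneg (hm i).le (hm j).le) (abs_nonneg _)
  · exact Finset.mem_univ a

lemma sset_convex (σ : Equiv.Perm (Fin N)) :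
    Convex ℝ {x : Fin N → ℝ | StrictMono (x ∘ σ)} := by
  intro x hx y hy a b ha hb hab i j hij
  have h1 := hx hij
  have h2 := hy hij
  simp only [Function.comp_apply, Pi.add_apply, Pi.smul_apply, smul_eq_mul] at *
  rcases ha.eq_or_lt with rfl | ha'
  · have hb1 : b = 1 := by linarith
    simpa [hb1] using h2
  · have := mul_le_mul_of_nonneg_left h2.le hb
    nlinarith

lemma sset_open (σ : Equiv.Perm (Fin N)) :
    IsOpen {x : Fin N → ℝ | StrictMono (x ∘ σ)} := by
  have h : {x : Fin N → ℝ | StrictMono (x ∘ σ)} =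
      ⋂ i, ⋂ j, {x : Fin N → ℝ | i < j → x (σ i) < x (σ j)} := by
    ext x
    constructor
    · intro h
      simp only [Set.mem_iInter, Set.mem_setOf_eq]
      intro i j hij
      exact h hij
    · intro h
      simp only [Set.mem_iInter, Set.mem_setOf_eq] at h
      intro a b hab
      exact h a b hab
  rw [h]
  refine isOpen_iInter_of_finite fun i => isOpen_iInter_of_finite fun j => ?_
  by_cases hij : i < j
  · simp only [hij, true_implies]
    exact isOpen_lt (continuous_apply (σ i)) (continuous_apply (σ j))
  · simp only [hij, false_implies]
    simp [Set.setOf_true]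

lemma mem_inj {x : Fin N → ℝ} (hx : StrictMono (x ∘ σ)) : Function.Injective x := by
  have h : x = (x ∘ σ) ∘ σ.symm := by ext i; simp
  rw [h]
  exact hx.injective.comp σ.symm.injective

lemma abs_sign {x : Fin N → ℝ} (hx : StrictMono (x ∘ σ)) {i j : Fin N}
    (hij : σ.symm i < σ.symm j) : |x i - x j| = x j - x i := by
  have h : x i < x j := by
    have := hx hij
    simpa using this
  rw [abs_of_neg (by linarith)]; ring

lemma scalar_conv {c P Q a b : ℝ} (hc : 0 ≤ c) (hP : 0 < P) (hQ : 0 < Q)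
    (ha : 0 ≤ a) (hb : 0 ≤ b) (hab : a + b = 1) :
    c / (a * P + b * Q) ≤ a * (c / P) + b * (c / Q) := by
  have hden : 0 < a * P + b * Q := by
    rcases eq_or_lt_of_le ha with rfl | ha'
    · have hb1 : b = 1 := by linarith
      simp [hb1, hQ]
    · nlinarith
  rw [div_le_iff₀ hden]
  have key : c * 1 ≤ (a * (c / P) + b * (c / Q)) * (a * P + b * Q) := by
    have e1 : (a * (c / P) + b * (c / Q)) * (a * P + b * Q)
        = c * (a^2 + b^2) + a * b * c * (P / Q + Q / P) := by
      field_simp; ring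
    have e2 : (2:ℝ) ≤ P / Q + Q / P := by
      rw [div_add_div _ _ hQ.ne' hP.ne', le_div_iff₀ (by positivity)]
      nlinarith [sq_nonneg (P - Q)]
    have e3 : a * b * c * 2 ≤ a * b * c * (P / Q + Q / P) :=
      mul_le_mul_of_nonneg_left e2 (by positivity)
    have e4 : c * 1 = c * (a ^ 2 + b ^ 2) + a * b * c * 2 := by
      rw [show (1:ℝ) = (a + b) ^ 2 by rw [hab]; ring]; ring
    linarith
  linarith [key]

lemma upot_convexOn (hm : ∀ i, 0 < m i) (σ : Equiv.Perm (Fin N)) :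
    ConvexOn ℝ {x : Fin N → ℝ | StrictMono (x ∘ σ)} (Upot m) := by
  refine ⟨sset_convex σ, ?_⟩
  intro x hx y hy a b ha hb hab
  have hxy : a • x + b • y ∈ {x : Fin N → ℝ | StrictMono (x ∘ σ)} :=
    sset_convex σ hx hy ha hb hab
  unfold Upot
  rw [smul_eq_mul, smul_eq_mul, Finset.mul_sum, Finset.mul_sum, ← Finset.sum_add_distrib]
  apply Finset.sum_le_sum
  intro i _
  rw [Finset.mul_sum, Finset.mul_sum, ← Finset.sum_add_distrib]
  apply Finset.sum_le_sum
  intro j hj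
  have hij : i < j := Finset.mem_Ioi.mp hj
  have hne : σ.symm i ≠ σ.symm j := fun h => hij.ne (σ.symm.injective h)
  rcases hne.lt_or_gt with h | h
  · have ex := abs_sign hx h
    have ey := abs_sign hy h
    have ez := abs_sign hxy h
    have hP : 0 < x j - x i := by
      have := abs_pos.mpr (sub_ne_zero.mpr (fun hh => hij.ne (mem_inj hx hh)))
      rw [ex] at this; linarith
    have hQ : 0 < y j - y i := by
      have := abs_pos.mpr (sub_ne_zero.mpr (fun hh => hij.ne (mem_inj hy hh)))
      rw [ey] at this; linarith
    rw [ex, ey, ez]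
    simp only [Pi.add_apply, Pi.smul_apply, smul_eq_mul]
    have e0 : a * x j + b * y j - (a * x i + b * y i) = a * (x j - x i) + b * (y j - y i) := by
      ring
    rw [e0]
    exact scalar_conv (mul_nonneg (hm i).le (hm j).le) hP hQ ha hb hab
  · have ex := abs_sign hx (i := j) (j := i) h
    have ey := abs_sign hy (i := j) (j := i) h
    have ez := abs_sign hxy (i := j) (j := i) h
    rw [abs_sub_comm] at ex ey ez
    have hP : 0 < x i - x j := by
      have := abs_pos.mpr (sub_ne_zero.mpr (fun hh => hij.ne (mem_inj hx hh)))
      rw [ex] at this; linarith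
    have hQ : 0 < y i - y j := by
      have := abs_pos.mpr (sub_ne_zero.mpr (fun hh => hij.ne (mem_inj hy hh)))
      rw [ey] at this; linarith
    rw [ex, ey, ez]
    simp only [Pi.add_apply, Pi.smul_apply, smul_eq_mul]
    have e0 : a * x i + b * y i - (a * x j + b * y j) = a * (x i - x j) + b * (y i - y j) := by
      ring
    rw [e0]
    exact scalar_conv (mul_nonneg (hm i).le (hm j).le) hP hQ ha hb hab

lemma inertia_strictConvexOn (hm : ∀ i, 0 < m i) :
    StrictConvexOn ℝ Set.univ (inertia m) := by
  refine ⟨convex_univ, ?_⟩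
  intro x _ y _ hxy a b ha hb hab
  obtain ⟨k, hk⟩ : ∃ k, x k ≠ y k := by
    by_contra h
    push_neg at h
    exact hxy (funext h)
  have hsq := Even.strictConvexOn_pow (even_two) (two_ne_zero)
  unfold inertia
  rw [smul_eq_mul, smul_eq_mul, Finset.mul_sum, Finset.mul_sum, ← Finset.sum_add_distrib]
  apply Finset.sum_lt_sum
  · intro i _
    have h := hsq.convexOn.2 (Set.mem_univ (x i)) (Set.mem_univ (y i)) ha.le hb.le hab
    simp only [smul_eq_mul] at h
    simp only [Pi.add_apply, Pi.smul_apply, smul_eq_mul]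
    nlinarith [(hm i).le, mul_le_mul_of_nonneg_left h (hm i).le]
  · refine ⟨k, Finset.mem_univ k, ?_⟩
    have h := hsq.2 (Set.mem_univ (x k)) (Set.mem_univ (y k)) hk ha hb hab
    simp only [smul_eq_mul] at h
    simp only [Pi.add_apply, Pi.smul_apply, smul_eq_mul]
    nlinarith [mul_lt_mul_of_pos_left h (hm k)]

lemma W_diff (hm : ∀ i, 0 < m i) {x : Fin N → ℝ} (hx : StrictMono (x ∘ σ)) :
    DifferentiableAt ℝ (fun z => Upot m z + inertia m z) x := by
  have hinj := mem_inj hx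
  apply DifferentiableAt.add
  · unfold Upot
    apply DifferentiableAt.fun_sum
    intro i _
    apply DifferentiableAt.fun_sum
    intro j hj
    have hij : i < j := Finset.mem_Ioi.mp hj
    have hne : x i - x j ≠ 0 := sub_ne_zero.mpr fun h => hij.ne (hinj h)
    have hsub : DifferentiableAt ℝ (fun z : Fin N → ℝ => z i - z j) x := by
      exact (differentiable_apply i).differentiableAt.sub (differentiable_apply j).differentiableAt
    have habs : DifferentiableAt ℝ (fun z : Fin N → ℝ => |z i - z j|) x := hsub.abs hne
    have : DifferentiableAt ℝ (fun z : Fin N → ℝ => m i * m j * (|z i - z j|)⁻¹) x :=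
      (habs.inv (abs_ne_zero.mpr hne)).const_mul (m i * m j)
    simpa only [div_eq_mul_inv] using this
  · unfold inertia
    apply DifferentiableAt.fun_sum
    intro i _
    have hev : DifferentiableAt ℝ (fun z : Fin N → ℝ => z i) x :=
      (differentiable_apply i).differentiableAt
    exact (hev.pow 2).const_mul (m i)

lemma crit_lt (hm : ∀ i, 0 < m i) {x y : Fin N → ℝ}
    (hx : StrictMono (x ∘ σ)) (hy : StrictMono (y ∘ σ)) (hne : y ≠ x)
    (hder : HasFDerivAt (fun z => Upot m z + inertia m z) (0 : (Fin N → ℝ) →L[ℝ] ℝ) x) :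
    Upot m x + inertia m x < Upot m y + inertia m y := by
  set W : (Fin N → ℝ) → ℝ := fun z => Upot m z + inertia m z with hW
  set S : Set (Fin N → ℝ) := {z | StrictMono (z ∘ σ)} with hS
  have hSc : Convex ℝ S := sset_convex σ
  have hconv : StrictConvexOn ℝ S W :=
    (upot_convexOn hm σ).add_strictConvexOn
      (((inertia_strictConvexOn hm).subset (Set.subset_univ S) hSc))
  have hyx : y - x ≠ 0 := sub_ne_zero.mpr hne
  set φ : ℝ → ℝ := fun t => W (x + t • (y - x)) with hφ
  have hmem : ∀ t ∈ Set.Icc (0:ℝ) 1, x + t • (y - x) ∈ S := by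
    intro t ht
    have e : x + t • (y - x) = (1 - t) • x + t • y := by
      funext i
      simp only [Pi.add_apply, Pi.smul_apply, Pi.sub_apply, smul_eq_mul]
      ring
    rw [e]
    exact hSc hx hy (by linarith [ht.2]) ht.1 (by ring)
  have hφconv : StrictConvexOn ℝ (Set.Icc (0:ℝ) 1) φ := by
    refine ⟨convex_Icc 0 1, ?_⟩
    intro p hp q hq hpq a b ha hb hab
    have e1 : x + (a * p + b * q) • (y - x)
        = a • (x + p • (y - x)) + b • (x + q • (y - x)) := by
      funext i
      simp only [Pi.add_apply, Pi.smul_apply, Pi.sub_apply, smul_eq_mul]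
      have hb' : b = 1 - a := by linarith
      subst hb'
      ring
    have hargne : x + p • (y - x) ≠ x + q • (y - x) := by
      intro h
      have h2 : (p - q) • (y - x) = 0 := by
        rw [sub_smul, sub_eq_zero]
        exact add_left_cancel h
      rcases smul_eq_zero.mp h2 with h3 | h3
      · exact hpq (by linarith [sub_eq_zero.mp h3])
      · exact hyx h3
    calc φ (a • p + b • q) = W (a • (x + p • (y - x)) + b • (x + q • (y - x))) := by
          rw [hφ]; simp only [smul_eq_mul]; rw [e1]
      _ < a • W (x + p • (y - x)) + b • W (x + q • (y - x)) :=
          hconv.2 (hmem p hp) (hmem q hq) hargne ha hb hab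
      _ = a • φ p + b • φ q := rfl
  have hd : HasDerivAt φ 0 0 := by
    have h1 : HasDerivAt (fun t : ℝ => x + t • (y - x)) (y - x) 0 := by
      simpa using ((hasDerivAt_id (0:ℝ)).smul_const (y - x)).const_add x
    have h0 : x + (0:ℝ) • (y - x) = x := by simp
    have h2 : HasFDerivAt W (0 : (Fin N → ℝ) →L[ℝ] ℝ) ((fun t : ℝ => x + t • (y - x)) 0) := by
      rw [show (fun t : ℝ => x + t • (y - x)) 0 = x by simp]
      exact hder
    have h3 := h2.comp_hasDerivAt 0 h1
    have h4 : HasDerivAt φ ((0 : (Fin N → ℝ) →L[ℝ] ℝ) (y - x)) 0 := h3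
    simpa using h4
  have hslope := hφconv.lt_slope_of_hasDerivAt (Set.left_mem_Icc.mpr zero_le_one)
    (Set.right_mem_Icc.mpr zero_le_one) zero_lt_one hd
  have hφ0 : φ 0 = W x := by rw [hφ]; simp
  have hφ1 : φ 1 = W y := by rw [hφ]; simp
  rw [slope_def_field] at hslope
  simp only [hφ0, hφ1] at hslope
  have h01 : ((1:ℝ) - 0) = 1 := by norm_num
  rw [h01, div_one] at hslope
  show W x < W y
  linarith
end helpers


/-- `W = U + I` has exactly one critical point in each component `Ω_σ`, and this
critical point is the unique global minimum of `W` on `Ω_σ`. -/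
theorem unique_critical_point {N : ℕ} (m : Fin N → ℝ) (hm : ∀ i, 0 < m i)
    (σ : Equiv.Perm (Fin N)) :
    ∃ c : Fin N → ℝ, StrictMono (c ∘ σ) ∧
      fderiv ℝ (fun z => Upot m z + inertia m z) c = 0 ∧
      (∀ x : Fin N → ℝ, StrictMono (x ∘ σ) →
        fderiv ℝ (fun z => Upot m z + inertia m z) x = 0 → x = c) ∧
      (∀ x : Fin N → ℝ, StrictMono (x ∘ σ) → x ≠ c →
        Upot m c + inertia m c < Upot m x + inertia m x) := by
  rcases Nat.eq_zero_or_pos N with hN0 | hN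
  · subst hN0
    refine ⟨fun _ => 0, ?_, ?_, ?_, ?_⟩
    · intro a b hab; exact a.elim0
    · have hconst : (fun z : Fin 0 → ℝ => Upot m z + inertia m z) = fun _ => 0 := by
        funext z; simp [Upot, inertia]
      rw [hconst]
      simp
    · intro x _ _; funext i; exact i.elim0
    · intro x _ hne; exact absurd (funext fun i => i.elim0) hne
  · haveI : Nonempty (Fin N) := ⟨⟨0, hN⟩⟩
    set W : (Fin N → ℝ) → ℝ := fun z => Upot m z + inertia m z with hWdef
    have hSopen := sset_open (N := N) σ
    set x₀ : Fin N → ℝ := fun i => (((σ.symm i : Fin N) : ℕ) : ℝ) with hx₀def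
    have hx₀S : StrictMono (x₀ ∘ σ) := by
      intro a b hab
      simp only [Function.comp_apply, hx₀def, Equiv.symm_apply_apply]
      exact_mod_cast (Fin.lt_iff_val_lt_val.mp hab)
    set C : ℝ := W x₀ with hCdef
    have hC0 : 0 ≤ C := add_nonneg (upot_nonneg hm _) (inertia_nonneg hm _)
    have huneN : (Finset.univ : Finset (Fin N)).Nonempty := Finset.univ_nonempty
    set mmin : ℝ := Finset.univ.inf' huneN m with hmmindef
    have hmminpos : 0 < mmin := by
      obtain ⟨i0, _, hi0⟩ := Finset.exists_mem_eq_inf' huneN m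
      rw [hmmindef, hi0]; exact hm i0
    have hmminle : ∀ i, mmin ≤ m i := fun i => Finset.inf'_le m (Finset.mem_univ i)
    set δ : ℝ := min 1 (mmin ^ 2 / (C + 1)) with hδdef
    have hδ0 : 0 < δ := lt_min one_pos (by positivity)
    have hδ1 : δ ≤ 1 := min_le_left _ _
    have hδ2 : δ ≤ mmin ^ 2 / (C + 1) := min_le_right _ _
    set K : Set (Fin N → ℝ) :=
      {x | (∀ i j : Fin N, i < j → x (σ i) + δ ≤ x (σ j)) ∧ inertia m x ≤ C} with hKdef
    have hKS : ∀ x ∈ K, StrictMono (x ∘ σ) := by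
      intro x hxK a b hab
      have := hxK.1 a b hab
      simp only [Function.comp_apply]
      linarith
    have hx₀K : x₀ ∈ K := by
      constructor
      · intro i j hij
        simp only [hx₀def, Equiv.symm_apply_apply]
        have h1 : ((i : ℕ) : ℝ) + 1 ≤ ((j : ℕ) : ℝ) := by
          exact_mod_cast Nat.succ_le_of_lt (Fin.lt_iff_val_lt_val.mp hij)
        linarith
      · have h0 : 0 ≤ Upot m x₀ := upot_nonneg hm _
        rw [hCdef]
        show inertia m x₀ ≤ Upot m x₀ + inertia m x₀
        linarith
    have hKclosed : IsClosed K := by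
      have hKeq : K = (⋂ i, ⋂ j, {x : Fin N → ℝ | i < j → x (σ i) + δ ≤ x (σ j)}) ∩
          {x : Fin N → ℝ | inertia m x ≤ C} := by
        ext x
        simp only [hKdef, Set.mem_setOf_eq, Set.mem_inter_iff, Set.mem_iInter]
      rw [hKeq]
      apply IsClosed.inter
      · refine isClosed_iInter fun i => isClosed_iInter fun j => ?_
        by_cases hij : i < j
        · simp only [hij, true_implies]
          exact isClosed_le ((continuous_apply (σ i)).add continuous_const)
            (continuous_apply (σ j))
        · simp only [hij, false_implies, Set.setOf_true]
          exact isClosed_univ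
      · exact isClosed_le
          (continuous_finset_sum _ fun i _ => continuous_const.mul ((continuous_apply i).pow 2))
          continuous_const
    have hsub : K ⊆ Set.pi Set.univ
        (fun i => Set.Icc (-(Real.sqrt (C / m i))) (Real.sqrt (C / m i))) := by
      intro x hxK i _
      have h1 : m i * x i ^ 2 ≤ inertia m x :=
        Finset.single_le_sum (f := fun j => m j * x j ^ 2)
          (fun j _ => mul_nonneg (hm j).le (sq_nonneg _)) (Finset.mem_univ i)
      have h2 : x i ^ 2 ≤ C / m i := by
        rw [le_div_iff₀ (hm i)]
        have := hxK.2
        nlinarith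
      have h3 : |x i| ≤ Real.sqrt (C / m i) := by
        rw [← Real.sqrt_sq_eq_abs]
        exact Real.sqrt_le_sqrt h2
      exact Set.mem_Icc.mpr (abs_le.mp h3)
    have hKcompact : IsCompact K :=
      IsCompact.of_isClosed_subset (isCompact_univ_pi fun i => isCompact_Icc) hKclosed hsub
    have hWcont : ContinuousOn W K := fun x hxK =>
      ((W_diff hm (hKS x hxK)).continuousAt).continuousWithinAt
    obtain ⟨c, hcK, hcmin⟩ := hKcompact.exists_isMinOn ⟨x₀, hx₀K⟩ hWcont
    have hcS : StrictMono (c ∘ σ) := hKS c hcK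
    have hWcC : W c ≤ C := hcmin hx₀K
    have hminS : ∀ x : Fin N → ℝ, StrictMono (x ∘ σ) → W c ≤ W x := by
      intro x hxS
      by_cases hxK : x ∈ K
      · exact hcmin hxK
      · by_cases h2 : inertia m x ≤ C
        · have hgap : ¬∀ i j : Fin N, i < j → x (σ i) + δ ≤ x (σ j) := fun h => hxK ⟨h, h2⟩
          push_neg at hgap
          obtain ⟨i, j, hij, hlt⟩ := hgap
          have hxij : x (σ i) < x (σ j) := hxS hij
          have habs : |x (σ i) - x (σ j)| < δ := by
            rw [abs_of_neg (by linarith)]; linarith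
          have habspos : 0 < |x (σ i) - x (σ j)| :=
            abs_pos.mpr (sub_ne_zero.mpr (ne_of_lt hxij))
          have hmm : mmin ^ 2 ≤ m (σ i) * m (σ j) := by
            nlinarith [hmminle (σ i), hmminle (σ j), hmminpos, hm (σ i), hm (σ j)]
          have q1 : C + 1 ≤ mmin ^ 2 / δ := by
            rw [le_div_iff₀ hδ0]
            have := (le_div_iff₀ (by linarith : (0:ℝ) < C + 1)).mp hδ2
            linarith
          have q2 : mmin ^ 2 / δ ≤ mmin ^ 2 / |x (σ i) - x (σ j)| :=
            div_le_div_of_nonneg_left (sq_nonneg mmin) habspos habs.le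
          have q3 : mmin ^ 2 / |x (σ i) - x (σ j)|
              ≤ m (σ i) * m (σ j) / |x (σ i) - x (σ j)| :=
            (div_le_div_iff_of_pos_right habspos).mpr hmm
          have hterm : C + 1 ≤ Upot m x := by
            rcases (show σ i ≠ σ j from fun h => hij.ne (σ.injective h)).lt_or_gt with hss | hss
            · exact le_trans q1 (le_trans q2 (le_trans q3 (term_le_upot hm x hss)))
            · have h4 := term_le_upot hm x hss
              have e : m (σ j) * m (σ i) / |x (σ j) - x (σ i)|
                  = m (σ i) * m (σ j) / |x (σ i) - x (σ j)| := by
                rw [mul_comm, abs_sub_comm]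
              rw [e] at h4
              exact le_trans q1 (le_trans q2 (le_trans q3 h4))
          have : C + 1 ≤ W x := by
            rw [hWdef]
            have := inertia_nonneg hm x
            simp only []
            linarith
          linarith
        · push_neg at h2
          have hU := upot_nonneg hm x
          have : C < W x := by
            rw [hWdef]
            simp only []
            linarith
          linarith
    have hcdiff := W_diff hm hcS
    have hcrit : fderiv ℝ W c = 0 := by
      apply IsLocalMin.fderiv_eq_zero
      exact Filter.eventually_of_mem (hSopen.mem_nhds hcS) (fun x hx => hminS x hx)
    have hcritHas : HasFDerivAt W (0 : (Fin N → ℝ) →L[ℝ] ℝ) c := by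
      have := hcdiff.hasFDerivAt
      rwa [hcrit] at this
    refine ⟨c, hcS, hcrit, ?_, ?_⟩
    · intro x hxS hx0
      by_contra hne
      have hxHas : HasFDerivAt W (0 : (Fin N → ℝ) →L[ℝ] ℝ) x := by
        have := (W_diff hm hxS).hasFDerivAt
        rwa [hx0] at this
      have h1 := crit_lt hm hxS hcS (fun h => hne h.symm) hxHas
      have h2 := crit_lt hm hcS hxS hne hcritHas
      linarith
    · intro x hxS hne
      exact crit_lt hm hcS hxS hne hcritHas
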